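/- Suppose the Poincaré polynomial of (G, Re) is palindrome, and let m ∈ G be the unique element with ℓ(m) = d. Let a = |Re| be the number of elements of G of length 1. Then there exists an integer n ≥ 1 dividing a! such that m^n lies in the center of G. -/

import Mathlib

/-- The length of `g ∈ G` with respect to a generating set `Re`:
the smallest `n` such that `g` is a product of `n` elements of `Re`. -/
noncomputable def wordLength {G : Type*} [Group G] (Re : Set G) (g : G) : ℕ :=
  sInf {n : ℕ | ∃ l : List G, (∀ x ∈ l, x ∈ Re) ∧ l.length = n ∧ l.prod = g}

section Aux

set_option linter.unusedSectionVars false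

variable {G : Type*} [Group G] [Finite G] {Re : Set G}

/-- In a finite group, the inverse of a product of elements of `Re` is again a
product of elements of `Re`. -/
lemma wl_inv_list (l : List G) (hl : ∀ x ∈ l, x ∈ Re) :
    ∃ l' : List G, (∀ x ∈ l', x ∈ Re) ∧ l'.prod = l.prod⁻¹ := by
  induction l with
  | nil => exact ⟨[], by simp⟩
  | cons a t iht =>
      obtain ⟨l', ha, hb⟩ := iht (fun z hz => hl z (List.mem_cons_of_mem a hz))
      have haRe : a ∈ Re := hl a List.mem_cons_self
      refine ⟨l' ++ List.replicate (orderOf a - 1) a, ?_, ?_⟩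
      · intro z hz
        rcases List.mem_append.1 hz with h | h
        · exact ha z h
        · rw [List.eq_of_mem_replicate h]; exact haRe
      · have h1a : a ^ (orderOf a - 1) = a⁻¹ := by
          have h1 : a ^ (orderOf a - 1) * a = 1 := by
            rw [← pow_succ, Nat.sub_add_cancel (Nat.one_le_iff_ne_zero.2 (orderOf_pos a).ne')]
            exact pow_orderOf_eq_one a
          exact eq_inv_of_mul_eq_one_left h1
        rw [List.prod_append, hb, List.prod_replicate, h1a, List.prod_cons, mul_inv_rev]

lemma wl_set_nonempty (hgen : Subgroup.closure Re = ⊤) (g : G) :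
    {n : ℕ | ∃ l : List G, (∀ x ∈ l, x ∈ Re) ∧ l.length = n ∧ l.prod = g}.Nonempty := by
  suffices h : ∃ l : List G, (∀ x ∈ l, x ∈ Re) ∧ l.prod = g by
    obtain ⟨l, h1, h2⟩ := h; exact ⟨l.length, l, h1, rfl, h2⟩
  have hg : g ∈ Subgroup.closure Re := by rw [hgen]; trivial
  induction hg using Subgroup.closure_induction with
  | mem x hx => exact ⟨[x], by simp [hx]⟩
  | one => exact ⟨[], by simp⟩
  | mul x y hx hy ihx ihy =>
      obtain ⟨l1, h1, h1'⟩ := ihx; obtain ⟨l2, h2, h2'⟩ := ihy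
      refine ⟨l1 ++ l2, ?_, by simp [h1', h2']⟩
      intro z hz; rcases List.mem_append.1 hz with h | h
      exacts [h1 z h, h2 z h]
  | inv x hx ih =>
      obtain ⟨l, h1, h2⟩ := ih
      obtain ⟨l', ha, hb⟩ := wl_inv_list l h1
      exact ⟨l', ha, by rw [hb, h2]⟩

lemma wl_le {g : G} {l : List G} (h1 : ∀ x ∈ l, x ∈ Re) (h2 : l.prod = g) :
    wordLength Re g ≤ l.length :=
  Nat.sInf_le ⟨l, h1, rfl, h2⟩

lemma wl_spec (hgen : Subgroup.closure Re = ⊤) (g : G) :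
    ∃ l : List G, (∀ x ∈ l, x ∈ Re) ∧ l.length = wordLength Re g ∧ l.prod = g :=
  Nat.sInf_mem (wl_set_nonempty hgen g)

lemma wl_mul_le (hgen : Subgroup.closure Re = ⊤) (g h : G) :
    wordLength Re (g * h) ≤ wordLength Re g + wordLength Re h := by
  obtain ⟨l1, a1, b1, c1⟩ := wl_spec hgen g
  obtain ⟨l2, a2, b2, c2⟩ := wl_spec hgen h
  have := wl_le (g := g * h) (l := l1 ++ l2)
    (by intro z hz; rcases List.mem_append.1 hz with hh | hh; exacts [a1 z hh, a2 z hh])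
    (by simp [c1, c2])
  simpa [b1, b2] using this

lemma wl_one_of_mem (hgen : Subgroup.closure Re = ⊤) (hne : (1 : G) ∉ Re) {s : G}
    (hs : s ∈ Re) : wordLength Re s = 1 := by
  have h1 : wordLength Re s ≤ 1 := by
    simpa using wl_le (g := s) (l := [s]) (by simp [hs]) (by simp)
  have h0 : wordLength Re s ≠ 0 := by
    intro h
    obtain ⟨l, a, b, c⟩ := wl_spec hgen s
    rw [h, List.length_eq_zero_iff] at b
    subst b
    simp at c
    exact hne (c ▸ hs)
  omega

end Aux

/-- If the Poincaré polynomial of `(G, Re)` is palindrome and `m` is the unique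
element of maximal length `d`, and `a = |Re|`, then `m ^ n` is central for some
`n ≥ 1` dividing `a!`. -/
theorem pow_max_length_central_of_palindrome
    {G : Type*} [Group G] [Finite G] (Re : Set G)
    (hgen : Subgroup.closure Re = ⊤) (hne : (1 : G) ∉ Re)
    (d : ℕ) (hub : ∀ g : G, wordLength Re g ≤ d) (hex : ∃ g : G, wordLength Re g = d)
    (hpal : ∀ i ≤ d, Nat.card {g : G // wordLength Re g = i}
      = Nat.card {g : G // wordLength Re g = d - i})
    (m : G) (hm : wordLength Re m = d)
    (hmu : ∀ g : G, wordLength Re g = d → g = m) :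
    ∃ n : ℕ, 1 ≤ n ∧ n ∣ Nat.factorial (Nat.card Re) ∧
      m ^ n ∈ Subgroup.center G := by
  classical
  have _inst : Fintype G := Fintype.ofFinite G
  set ℓ : G → ℕ := wordLength Re with hℓ
  set c : ℕ → ℕ := fun i => (Finset.univ.filter fun g : G => ℓ g = i).card with hc
  have hcard_eq : ∀ i, Nat.card {g : G // ℓ g = i} = c i := by
    intro i
    rw [Nat.card_eq_fintype_card, Fintype.card_subtype]
  have hmaps : ∀ g ∈ (Finset.univ : Finset G), ℓ g ∈ Finset.range (d + 1) := by
    intro g _; exact Finset.mem_range.2 (Nat.lt_succ_of_le (hub g))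
  -- total count
  have hsum_c : ∑ i ∈ Finset.range (d + 1), c i = Fintype.card G := by
    have h0 := Finset.sum_fiberwise_of_maps_to hmaps (fun _ : G => (1 : ℕ))
    simp only [Finset.sum_const, smul_eq_mul, mul_one, Finset.card_univ] at h0
    exact h0
  -- total length
  set T : ℕ := ∑ g : G, ℓ g with hTdef
  have hT : T = ∑ i ∈ Finset.range (d + 1), c i * i := by
    rw [hTdef, ← Finset.sum_fiberwise_of_maps_to hmaps ℓ]
    refine Finset.sum_congr rfl fun i _ => ?_
    rw [hc]
    calc ∑ g ∈ Finset.univ.filter fun g : G => ℓ g = i, ℓ g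
        = ∑ _g ∈ Finset.univ.filter fun g : G => ℓ g = i, i :=
          Finset.sum_congr rfl fun g hg => (Finset.mem_filter.1 hg).2
      _ = _ := by rw [Finset.sum_const, smul_eq_mul]
  have hcc : ∀ i ≤ d, c i = c (d - i) := by
    intro i hi
    rw [← hcard_eq, ← hcard_eq]
    exact hpal i hi
  have hT2 : ∑ i ∈ Finset.range (d + 1), c i * (d - i) = T := by
    have hrefl := Finset.sum_range_reflect (fun i => c i * i) (d + 1)
    calc ∑ i ∈ Finset.range (d + 1), c i * (d - i)
        = ∑ i ∈ Finset.range (d + 1), c (d - i) * (d - i) := by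
          refine Finset.sum_congr rfl fun i hi => ?_
          rw [← hcc i (Nat.lt_succ_iff.1 (Finset.mem_range.1 hi))]
      _ = ∑ i ∈ Finset.range (d + 1), c i * i := by
          simpa using hrefl
      _ = T := hT.symm
  have h2T : T + T = Fintype.card G * d := by
    calc T + T = ∑ i ∈ Finset.range (d + 1), (c i * i + c i * (d - i)) := by
          rw [Finset.sum_add_distrib, ← hT, hT2]
      _ = ∑ i ∈ Finset.range (d + 1), c i * d := by
          refine Finset.sum_congr rfl fun i hi => ?_
          have : i ≤ d := Nat.lt_succ_iff.1 (Finset.mem_range.1 hi)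
          rw [← Nat.mul_add, Nat.add_sub_cancel' this]
      _ = (∑ i ∈ Finset.range (d + 1), c i) * d := by rw [Finset.sum_mul]
      _ = Fintype.card G * d := by rw [hsum_c]
  -- the sum of the paired lengths
  have hsum_inv : ∑ g : G, ℓ (g⁻¹ * m) = T := by
    rw [hTdef]
    exact Fintype.sum_equiv ((Equiv.inv G).trans (Equiv.mulRight m))
      (fun g => ℓ (g⁻¹ * m)) ℓ (fun g => rfl)
  have hsum2 : ∑ g : G, (ℓ g + ℓ (g⁻¹ * m)) = Fintype.card G * d := by
    rw [Finset.sum_add_distrib, ← hTdef, hsum_inv, h2T]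
  have hge : ∀ g : G, d ≤ ℓ g + ℓ (g⁻¹ * m) := by
    intro g
    have h := wl_mul_le hgen g (g⁻¹ * m)
    rw [mul_inv_cancel_left] at h
    calc d = ℓ m := hm.symm
      _ ≤ _ := h
  have hkey : ∀ g : G, ℓ g + ℓ (g⁻¹ * m) = d := by
    by_contra h
    push_neg at h
    obtain ⟨g0, hg0⟩ := h
    have hlt : d < ℓ g0 + ℓ (g0⁻¹ * m) := lt_of_le_of_ne (hge g0) (Ne.symm hg0)
    have hslt : ∑ _g : G, d < ∑ g : G, (ℓ g + ℓ (g⁻¹ * m)) :=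
      Finset.sum_lt_sum (fun i _ => hge i) ⟨g0, Finset.mem_univ _, hlt⟩
    rw [hsum2, Finset.sum_const, smul_eq_mul, Finset.card_univ] at hslt
    exact lt_irrefl _ hslt
  -- conjugation by m preserves length
  have hconj : ∀ g : G, ℓ (m⁻¹ * g * m) = ℓ g := by
    intro g
    have h1 := hkey g
    have h2 := hkey (g⁻¹ * m)
    have h3 : (g⁻¹ * m)⁻¹ * m = m⁻¹ * g * m := by group
    rw [h3] at h2
    omega
  have hconjRe : ∀ s ∈ Re, m⁻¹ * s * m ∈ Re := by
    intro s hs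
    have h1 : ℓ (m⁻¹ * s * m) = 1 := by
      rw [hconj]; exact wl_one_of_mem hgen hne hs
    obtain ⟨l, a, b, cc⟩ := wl_spec hgen (m⁻¹ * s * m)
    rw [hℓ] at h1
    rw [h1] at b
    obtain ⟨x, rfl⟩ := List.length_eq_one_iff.1 b
    rw [List.prod_singleton] at cc
    rw [← cc]
    exact a x (by simp)
  -- the permutation of Re induced by conjugation
  have _instRe : Fintype ↥Re := Fintype.ofFinite _
  set π : ↥Re → ↥Re := fun s => ⟨m⁻¹ * (s : G) * m, hconjRe s s.2⟩ with hπ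
  have hπinj : Function.Injective π := by
    intro a b h
    have h' : m⁻¹ * (a : G) * m = m⁻¹ * (b : G) * m := congrArg Subtype.val h
    have h2 : m * (m⁻¹ * (a : G) * m) * m⁻¹ = m * (m⁻¹ * (b : G) * m) * m⁻¹ := by rw [h']
    ext
    simpa [mul_assoc] using h2
  set e : Equiv.Perm ↥Re := Equiv.ofBijective π (Finite.injective_iff_bijective.1 hπinj)
    with he
  have hepow : ∀ (k : ℕ) (s : ↥Re), ((e ^ k) s : G) = m⁻¹ ^ k * (s : G) * m ^ k := by
    intro k
    induction k with
    | zero => intro s; simp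
    | succ k ih =>
        intro s
        rw [pow_succ, Equiv.Perm.mul_apply, ih (e s)]
        have hes : ((e s : ↥Re) : G) = m⁻¹ * (s : G) * m := rfl
        rw [hes, pow_succ m k, pow_succ m⁻¹ k]
        simp only [mul_assoc]
        rw [pow_mul_comm' m k]
  set n : ℕ := (Nat.card ↥Re).factorial with hn
  have horder : e ^ n = 1 := by
    have h1 : orderOf e ∣ Nat.card (Equiv.Perm ↥Re) := orderOf_dvd_natCard e
    have h2 : Nat.card (Equiv.Perm ↥Re) = n := by
      rw [hn, Nat.card_eq_fintype_card, Nat.card_eq_fintype_card, Fintype.card_perm]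
    exact orderOf_dvd_iff_pow_eq_one.1 (h2 ▸ h1)
  have hcomm : ∀ s ∈ Re, m ^ n * s = s * m ^ n := by
    intro s hs
    have h1 := hepow n ⟨s, hs⟩
    rw [horder] at h1
    have h2 : (s : G) = m⁻¹ ^ n * s * m ^ n := h1
    calc m ^ n * s = m ^ n * (m⁻¹ ^ n * s * m ^ n) := by rw [← h2]
      _ = s * m ^ n := by group
  refine ⟨n, Nat.one_le_iff_ne_zero.2 (Nat.factorial_pos _).ne', dvd_rfl, ?_⟩
  rw [Subgroup.mem_center_iff]
  intro g
  have hg : g ∈ Subgroup.centralizer {m ^ n} := by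
    have hle : Subgroup.closure Re ≤ Subgroup.centralizer {m ^ n} := by
      rw [Subgroup.closure_le]
      intro s hs
      rw [SetLike.mem_coe, Subgroup.mem_centralizer_iff]
      intro h hh
      rw [Set.mem_singleton_iff] at hh
      subst hh
      exact hcomm s hs
    exact hle (by rw [hgen]; trivial)
  rw [Subgroup.mem_centralizer_iff] at hg
  exact (hg (m ^ n) rfl).symm
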